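/- For an index 𝐤 = (k_1,…,k_r) and 1 ≤ i ≤ r, the variant finite multiple zeta value satisfies ζ^{(i)}_𝒜(𝐤) = Σ_{φ ∈ Φ^i_r} ζ_𝒜(Σ_{j: φ(j)=1} k_j, …, Σ_{j: φ(j)=s} k_j), where for each φ the integer s is determined by φ ∈ Φ_{r,s}. -/

import Mathlib

open scoped BigOperators

set_option synthInstance.maxHeartbeats 400000

namespace FMP

/-- The type of prime numbers. -/
abbrev PP := Nat.Primes

instance (p : PP) : Fact (Nat.Prime (p : ℕ)) := ⟨p.2⟩

/-- The ideal of families vanishing at all but finitely many primes. -/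
def cofinIdeal (R : PP → Type) [∀ p, CommRing (R p)] : Ideal (∀ p, R p) where
  carrier := {f | ∀ᶠ p in Filter.cofinite, f p = 0}
  add_mem' := by
    intro f g hf hg
    show ∀ᶠ p in Filter.cofinite, (f + g) p = 0
    simp only [Set.mem_setOf_eq] at hf hg
    filter_upwards [hf, hg] with p h1 h2
    simp [h1, h2]
  zero_mem' := by
    show ∀ᶠ p in Filter.cofinite, (0 : ∀ p, R p) p = 0
    exact Filter.Eventually.of_forall fun p => rfl
  smul_mem' := by
    intro c f hf
    show ∀ᶠ p in Filter.cofinite, (c • f) p = 0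
    simp only [Set.mem_setOf_eq] at hf
    filter_upwards [hf] with p h
    simp [h]

lemma mem_cofinIdeal {R : PP → Type} [∀ p, CommRing (R p)] (f : ∀ p, R p) :
    f ∈ cofinIdeal R ↔ ∀ᶠ p in Filter.cofinite, f p = 0 := Iff.rfl

/-- The ring 𝒜 = (∏ₚ 𝔽ₚ)/(⊕ₚ 𝔽ₚ). -/
abbrev A : Type := (∀ p : PP, ZMod p) ⧸ cofinIdeal fun p => ZMod p

/-- The ring ℬ = (∏ₚ 𝔽ₚ[T])/(⊕ₚ 𝔽ₚ[T]). -/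
abbrev B : Type := (∀ p : PP, Polynomial (ZMod p)) ⧸ cofinIdeal fun p => Polynomial (ZMod p)

noncomputable def Amk : (∀ p : PP, ZMod p) →+* A := Ideal.Quotient.mk _
noncomputable def Bmk : (∀ p : PP, Polynomial (ZMod p)) →+* B := Ideal.Quotient.mk _

/-- The componentwise action of 𝒜 on ℬ, as a ring homomorphism 𝒜 →+* ℬ. -/
noncomputable def AtoB : A →+* B :=
  Ideal.Quotient.lift _
    (Bmk.comp (Pi.ringHom fun p => Polynomial.C.comp (Pi.evalRingHom (fun q : PP => ZMod (q : ℕ)) p)))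
    (fun f hf => by
      rw [RingHom.comp_apply]
      rw [show Bmk = Ideal.Quotient.mk (cofinIdeal fun p => Polynomial (ZMod p)) from rfl]
      rw [Ideal.Quotient.eq_zero_iff_mem, mem_cofinIdeal]
      rw [mem_cofinIdeal] at hf
      filter_upwards [hf] with p h
      show Polynomial.C (f p) = 0
      rw [h, map_zero])

/-- Partial sums: `psum l i = l 0 + ... + l i`. -/
def psum {r : ℕ} (l : Fin r → ℕ) (i : Fin r) : ℕ := ∑ j ∈ Finset.Iic i, l j

/-- The finset of tuples `(l 0, ..., l (r-1))` with `0 < l i < p`. -/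
def pf (r p : ℕ) : Finset (Fin r → ℕ) := Fintype.piFinset fun _ => Finset.Ioo 0 p

/-- The denominator `L_1^{k_1} ⋯ L_r^{k_r}` of a term, as an element of 𝔽ₚ.
(Its inverse is `0` whenever some partial sum is divisible by `p`, so taking inverses
of these denominators automatically implements the restricted sums `Σ'`.) -/
def den (p : PP) (k : List ℕ) (l : Fin k.length → ℕ) : ZMod (p : ℕ) :=
  ∏ i, ((psum l i : ℕ) : ZMod (p : ℕ)) ^ k.get i

/-- The weight of an index. -/
def wt (k : List ℕ) : ℕ := k.sum

/-- The finite multiple zeta value ζ_𝒜(k). -/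
noncomputable def zetaA (k : List ℕ) : A :=
  Amk fun p => ∑ l ∈ (pf k.length (p : ℕ)).filter (fun l => ∑ i, l i < (p : ℕ)), (den p k l)⁻¹

/-- The variant ζ^{(i)}_𝒜(k) of finite multiple zeta values. -/
noncomputable def zetaAi (i : ℕ) (k : List ℕ) : A :=
  Amk fun p => ∑ l ∈ (pf k.length (p : ℕ)).filter
      (fun l => (i - 1) * (p : ℕ) < ∑ j, l j ∧ ∑ j, l j < i * (p : ℕ)), (den p k l)⁻¹

/-- The finite multiple polylogarithm li_k(T) ∈ ℬ. -/
noncomputable def liT (k : List ℕ) : B :=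
  Bmk fun p => ∑ l ∈ pf k.length (p : ℕ),
    Polynomial.C ((den p k l)⁻¹) * Polynomial.X ^ (∑ i, l i)

/-- The element T^p of ℬ. -/
noncomputable def Tp : B := Bmk fun p => Polynomial.X ^ (p : ℕ)

/-- The finite multiple polylogarithm li(λ, μ, ν; T) of type (λ, μ, ν). -/
noncomputable def liType (lam mu nu : List ℕ) : B :=
  Bmk fun p =>
    ∑ l ∈ pf lam.length (p : ℕ), ∑ m ∈ pf mu.length (p : ℕ), ∑ n ∈ pf nu.length (p : ℕ),
      Polynomial.C ((den p lam l * den p mu m *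
          ∏ z, ((((∑ i, l i) + (∑ j, m j) + psum n z : ℕ)) : ZMod (p : ℕ)) ^ nu.get z)⁻¹) *
        Polynomial.X ^ ((∑ i, l i) + (∑ j, m j) + (∑ z, n z))

section Comb

/-- Extension of φ : Fin r → Fin s to ℕ → ℕ (by zero). -/
def extF {r s : ℕ} (φ : Fin r → Fin s) : ℕ → ℕ := fun a => if h : a < r then (φ ⟨a, h⟩ : ℕ) else 0

/-- Φ_{r,s}: surjections φ : [r] → [s] with φ(a) ≠ φ(a+1) for all a. -/
def PhiSet (r s : ℕ) : Set (Fin r → Fin s) :=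
  {φ | Function.Surjective φ ∧ ∀ a : ℕ, a + 1 < r → extF φ a ≠ extF φ (a + 1)}

/-- δ_φ(i) = #{a ∈ [i-1] : φ(a) > φ(a+1)} (1-based i). -/
def deltaF {r s : ℕ} (φ : Fin r → Fin s) (i : ℕ) : ℕ :=
  ((Finset.range (i - 1)).filter fun a => extF φ (a + 1) < extF φ a).card

/-- β(φ) = δ_φ(r) + 1. -/
def betaF {r s : ℕ} (φ : Fin r → Fin s) : ℕ := deltaF φ r + 1

/-- X_r: tuples (l_1, ..., l_r) ∈ [p-1]^r all of whose partial sums are prime to p. -/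
def Xr (p r : ℕ) : Set (Fin r → ℕ) :=
  {l | (∀ i, 0 < l i ∧ l i < p) ∧ ∀ i, Nat.Coprime (psum l i) p}

/-- Y_s: tuples 0 < A_1 < ⋯ < A_s < p. -/
def Ys (p s : ℕ) : Set (Fin s → ℕ) :=
  {Av | StrictMono Av ∧ (∀ t, 0 < Av t) ∧ ∀ t, Av t < p}

end Comb


open scoped Classical

section Aux
variable {r s : ℕ}
variable {r s : ℕ}

lemma fin_Iic_succ (j : ℕ) (h : j + 1 < r) :
    Finset.Iic (⟨j+1, h⟩ : Fin r) =
      insert (⟨j+1, h⟩ : Fin r) (Finset.Iic (⟨j, by omega⟩ : Fin r)) := by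
  ext a
  simp only [Finset.mem_Iic, Finset.mem_insert, Fin.le_def, Fin.ext_iff]
  omega

lemma psum_succ (l : Fin r → ℕ) (j : ℕ) (h : j + 1 < r) :
    psum l ⟨j+1, h⟩ = psum l ⟨j, by omega⟩ + l ⟨j+1, h⟩ := by
  rw [psum, fin_Iic_succ j h, Finset.sum_insert (by simp [Finset.mem_Iic, Fin.le_def]), psum,
    add_comm]

lemma psum_zero' (l : Fin r → ℕ) (h : 0 < r) : psum l ⟨0, h⟩ = l ⟨0, h⟩ := by
  rw [psum]
  have : Finset.Iic (⟨0,h⟩ : Fin r) = {⟨0,h⟩} := by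
    ext a
    simp only [Finset.mem_Iic, Finset.mem_singleton, Fin.le_def, Fin.ext_iff]
    omega
  rw [this, Finset.sum_singleton]

lemma psum_last (l : Fin r → ℕ) (h : 0 < r) : psum l ⟨r-1, by omega⟩ = ∑ j, l j := by
  rw [psum]
  apply Finset.sum_congr _ (fun _ _ => rfl)
  ext a
  simp only [Finset.mem_Iic, Finset.mem_univ, Fin.le_def, iff_true]
  have := a.2
  omega

lemma psum_le_total (l : Fin r → ℕ) (t : Fin r) : psum l t ≤ ∑ j, l j :=
  Finset.sum_le_sum_of_subset (Finset.subset_univ _)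

lemma psum_pos (l : Fin r → ℕ) (hl : ∀ j, 0 < l j) (t : Fin r) : 0 < psum l t :=
  Finset.sum_pos (fun j _ => hl j) ⟨t, Finset.mem_Iic.2 le_rfl⟩

lemma psum_strictMono (m : Fin s → ℕ) (hm : ∀ t, 0 < m t) : StrictMono (psum m) := by
  intro a b hab
  apply Finset.sum_lt_sum_of_subset (Finset.Iic_subset_Iic.2 hab.le)
    (Finset.mem_Iic.2 (le_refl b)) (by simp [Finset.mem_Iic, hab.not_ge]) (hm b)
    (fun j _ _ => Nat.zero_le _)

open scoped Classical

/-- residue of partial sum -/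
def Ahat (p : ℕ) {r : ℕ} (l : Fin r → ℕ) (j : Fin r) : ℕ := psum l j % p

/-- number of wraps among the first n steps -/
noncomputable def wr (p : ℕ) {r : ℕ} (l : Fin r → ℕ) (n : ℕ) : ℕ :=
  ((Finset.range n).filter fun a =>
    ∃ h : a + 1 < r, Ahat p l ⟨a+1, h⟩ < Ahat p l ⟨a, by omega⟩).card

lemma mod_two_p (p v : ℕ) (h2 : v < 2*p) : v % p = if v < p then v else v - p := by
  split
  · exact Nat.mod_eq_of_lt ‹_›
  · rw [Nat.mod_eq_sub_mod (by omega)]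
    exact Nat.mod_eq_of_lt (by omega)

lemma wr_succ (p : ℕ) (l : Fin r → ℕ) (n : ℕ) (h : n + 1 < r) :
    wr p l (n+1) = wr p l n +
      if Ahat p l ⟨n+1, h⟩ < Ahat p l ⟨n, by omega⟩ then 1 else 0 := by
  rw [wr, Finset.range_add_one, Finset.filter_insert]
  split
  · rename_i hc
    rw [Finset.card_insert_of_notMem (by simp)]
    rw [if_pos]
    · rfl
    · obtain ⟨h', hlt⟩ := hc
      exact hlt
  · rw [if_neg, Nat.add_zero]
    · rfl
    · rename_i hc
      exact fun hlt => hc ⟨h, hlt⟩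

lemma psum_eq_ahat_add_wr (p : ℕ) (l : Fin r → ℕ) (hl : ∀ j, 0 < l j ∧ l j < p) :
    ∀ (j : ℕ) (h : j < r), psum l ⟨j, h⟩ = Ahat p l ⟨j, h⟩ + wr p l j * p := by
  intro j
  induction j with
  | zero =>
    intro h
    have hb := hl ⟨0, h⟩
    simp [wr, Ahat, psum_zero' l h, Nat.mod_eq_of_lt hb.2]
    left; rfl
  | succ j ih =>
    intro h
    have hj : j < r := by omega
    have hp : 0 < p := lt_trans (hl ⟨0, by omega⟩).1 (hl ⟨0, by omega⟩).2
    have hps : psum l ⟨j+1, h⟩ = psum l ⟨j, hj⟩ + l ⟨j+1, h⟩ := psum_succ l j h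
    set x := Ahat p l ⟨j, hj⟩ with hxdef
    set c := l ⟨j+1, h⟩ with hcdef
    have hx : x < p := Nat.mod_lt _ hp
    have hc1 : 0 < c := (hl _).1
    have hc2 : c < p := (hl _).2
    have hA : Ahat p l ⟨j+1, h⟩ = (x + c) % p := by
      rw [Ahat, hps, Nat.add_mod, Nat.mod_eq_of_lt hc2, hxdef, Ahat]
    have hwr := wr_succ p l j h
    rw [hps, ih hj, hA, hwr]
    by_cases hcase : x + c < p
    · have h1 : (x + c) % p = x + c := Nat.mod_eq_of_lt hcase
      rw [h1, if_neg (by omega)]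
      ring
    · have h1 : (x + c) % p = x + c - p := by
        rw [mod_two_p p _ (by omega), if_neg (by omega)]
      rw [h1, if_pos (by omega)]
      have : p ≤ x + c := by omega
      ring_nf
      omega
/-- consecutive differences -/
def dstep {s : ℕ} (c : Fin s → ℕ) : Fin s → ℕ :=
  fun t => c t - (if h : t.1 = 0 then 0 else c ⟨t.1 - 1, by omega⟩)

lemma psum_dstep (c : Fin s → ℕ) (hc : StrictMono c) :
    ∀ (t : ℕ) (h : t < s), psum (dstep c) ⟨t, h⟩ = c ⟨t, h⟩ := by
  intro t
  induction t with
  | zero => intro h; simp [psum_zero', dstep]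
  | succ t ih =>
    intro h
    rw [psum_succ _ t h, ih (by omega)]
    have hd : dstep c ⟨t+1, h⟩ = c ⟨t+1, h⟩ - c ⟨t, by omega⟩ := by simp [dstep]
    have hle : c ⟨t, by omega⟩ ≤ c ⟨t+1, h⟩ := (hc (by simp [Fin.lt_def])).le
    rw [hd]
    omega

lemma dstep_psum (m : Fin s → ℕ) : dstep (psum m) = m := by
  funext t
  rcases t with ⟨t, ht⟩
  cases t with
  | zero => simp [dstep, psum_zero']
  | succ t =>
    have h1 : psum m ⟨t+1, ht⟩ = psum m ⟨t, by omega⟩ + m ⟨t+1, ht⟩ := psum_succ m t ht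
    have eidx : (⟨t+1-1, by omega⟩ : Fin s) = ⟨t, by omega⟩ := rfl
    simp only [dstep]
    rw [dif_neg (by omega), eidx, h1]
    omega

/-- reconstruct l from the sequence of residues of partial sums -/
def lOfB (p : ℕ) {r : ℕ} (B : Fin r → ℕ) : Fin r → ℕ :=
  fun j => if h : j.1 = 0 then B j else (B j + p - B ⟨j.1 - 1, by omega⟩) % p

lemma lOfB_bounds (p : ℕ) (B : Fin r → ℕ) (hB : ∀ j, 0 < B j ∧ B j < p)
    (hadj : ∀ (a : ℕ) (h : a + 1 < r), B ⟨a+1, h⟩ ≠ B ⟨a, by omega⟩) (j : Fin r) :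
    0 < lOfB p B j ∧ lOfB p B j < p := by
  obtain ⟨j, hj⟩ := j
  have hp : 0 < p := lt_trans (hB ⟨j, hj⟩).1 (hB ⟨j, hj⟩).2
  cases j with
  | zero => simpa [lOfB] using hB ⟨0, hj⟩
  | succ j =>
    simp only [lOfB, dif_neg (Nat.succ_ne_zero j)]
    constructor
    · set x := B ⟨j+1-1, by omega⟩ with hx
      set y := B ⟨j+1, hj⟩ with hy
      have h1 : 0 < x ∧ x < p := hB _
      have h2 : 0 < y ∧ y < p := hB _
      have hne : y ≠ x := by
        have := hadj j hj
        simpa [hx, hy] using this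
      rw [mod_two_p p _ (by omega)]
      split <;> omega
    · exact Nat.mod_lt _ hp

lemma ahat_lOfB (p : ℕ) (B : Fin r → ℕ) (hB : ∀ j, 0 < B j ∧ B j < p) :
    ∀ (j : ℕ) (h : j < r), Ahat p (lOfB p B) ⟨j, h⟩ = B ⟨j, h⟩ := by
  intro j
  induction j with
  | zero =>
    intro h
    have := (hB ⟨0, h⟩)
    simp [Ahat, psum_zero', lOfB, Nat.mod_eq_of_lt this.2]
  | succ j ih =>
    intro h
    have hj : j < r := by omega
    have hp : 0 < p := lt_trans (hB ⟨j, hj⟩).1 (hB ⟨j, hj⟩).2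
    have hps : psum (lOfB p B) ⟨j+1, h⟩ =
        psum (lOfB p B) ⟨j, hj⟩ + lOfB p B ⟨j+1, h⟩ := psum_succ _ j h
    have hprev : B ⟨j+1-1, by omega⟩ = B ⟨j, hj⟩ := by congr 1
    have hstep : lOfB p B ⟨j+1, h⟩ = (B ⟨j+1, h⟩ + p - B ⟨j, hj⟩) % p := by
      simp only [lOfB, dif_neg (Nat.succ_ne_zero j)]
      rw [hprev]
    have hih : psum (lOfB p B) ⟨j, hj⟩ % p = B ⟨j, hj⟩ := ih hj
    rw [Ahat, hps, hstep, Nat.add_mod, Nat.mod_mod_of_dvd _ dvd_rfl, hih]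
    have hx := hB ⟨j, hj⟩
    have hy := hB ⟨j+1, h⟩
    set x := B ⟨j, hj⟩
    set y := B ⟨j+1, h⟩
    rw [mod_two_p p (y + p - x) (by omega)]
    split
    · have hxy : x + (y + p - x) = y + p := by omega
      rw [hxy, mod_two_p p _ (by omega), if_neg (by omega)]
      omega
    · have hxy : x + (y + p - x - p) = y := by omega
      rw [hxy, Nat.mod_eq_of_lt hy.2]

lemma lOfB_ahat (p : ℕ) (l : Fin r → ℕ) (hl : ∀ j, 0 < l j ∧ l j < p) :
    lOfB p (Ahat p l) = l := by
  funext j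
  rcases j with ⟨j, hj⟩
  have hp : 0 < p := lt_trans (hl ⟨j, hj⟩).1 (hl ⟨j, hj⟩).2
  cases j with
  | zero =>
    simp [lOfB, Ahat, psum_zero', Nat.mod_eq_of_lt (hl ⟨0, hj⟩).2]
  | succ j =>
    have hjr : j < r := by omega
    simp only [lOfB, dif_neg (Nat.succ_ne_zero j)]
    have hps : psum l ⟨j+1, hj⟩ = psum l ⟨j, hjr⟩ + l ⟨j+1, hj⟩ := psum_succ l j hj
    set a := Ahat p l ⟨j+1-1, by omega⟩ with ha
    have eidx : (⟨j+1-1, by omega⟩ : Fin r) = ⟨j, hjr⟩ := rfl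
    have ha' : a = psum l ⟨j, hjr⟩ % p := by
      rw [ha, Ahat, eidx]
    set c := l ⟨j+1, hj⟩ with hc
    have hc1 : 0 < c := (hl _).1
    have hc2 : c < p := (hl _).2
    have hA : Ahat p l ⟨j+1, hj⟩ = (a + c) % p := by
      rw [Ahat, hps, Nat.add_mod, Nat.mod_eq_of_lt hc2, ha']
    have haP : a < p := by rw [ha']; exact Nat.mod_lt _ hp
    rw [hA, mod_two_p p (a + c) (by omega)]
    split
    · have : a + c + p - a = c + p := by omega
      rw [this, mod_two_p p _ (by omega), if_neg (by omega)]
      omega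
    · have : a + c - p + p - a = c := by omega
      rw [this, Nat.mod_eq_of_lt hc2]

section Fwd
variable (P : ℕ) {r s : ℕ} (φ : Fin r → Fin s) (m : Fin s → ℕ)

/-- the intended sequence of residues: B_j = M_{φ(j)} -/
def BfF (φ : Fin r → Fin s) (m : Fin s → ℕ) : Fin r → ℕ := fun j => psum m (φ j)

/-- the forward map (φ, m) ↦ l -/
def lF (P : ℕ) (φ : Fin r → Fin s) (m : Fin s → ℕ) : Fin r → ℕ := lOfB P (BfF φ m)

variable (hm : ∀ t, 0 < m t ∧ m t < P) (hsum : ∑ t, m t < P)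

include hm hsum in
lemma BfF_bounds : ∀ j, 0 < BfF φ m j ∧ BfF φ m j < P := fun j =>
  ⟨psum_pos m (fun t => (hm t).1) _, lt_of_le_of_lt (psum_le_total m _) hsum⟩

include hm in
lemma BfF_adj (hφ : φ ∈ PhiSet r s) :
    ∀ (a : ℕ) (h : a + 1 < r), BfF φ m ⟨a+1, h⟩ ≠ BfF φ m ⟨a, by omega⟩ := by
  intro a h hEq
  have hsm : StrictMono (psum m) := psum_strictMono m (fun t => (hm t).1)
  have hne := hφ.2 a h
  apply hne
  have : φ ⟨a+1, h⟩ = φ ⟨a, by omega⟩ := hsm.injective hEq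
  rw [extF, extF, dif_pos (by omega : a < r), dif_pos h, ← this]

include hm hsum in
lemma lF_bounds (hφ : φ ∈ PhiSet r s) : ∀ j, 0 < lF P φ m j ∧ lF P φ m j < P :=
  lOfB_bounds P _ (BfF_bounds P φ m hm hsum) (BfF_adj P φ m hm hφ)

include hm hsum in
lemma ahat_lF : ∀ (j : ℕ) (h : j < r), Ahat P (lF P φ m) ⟨j, h⟩ = BfF φ m ⟨j, h⟩ :=
  ahat_lOfB P _ (BfF_bounds P φ m hm hsum)

include hm hsum in
lemma wr_lF (hφ : φ ∈ PhiSet r s) (n : ℕ) (hn : n ≤ r - 1) (hr : 0 < r) :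
    wr P (lF P φ m) n = ((Finset.range n).filter fun a => extF φ (a + 1) < extF φ a).card := by
  rw [wr]
  congr 1
  apply Finset.filter_congr
  intro a ha
  rw [Finset.mem_range] at ha
  have har : a + 1 < r := by omega
  have hsm : StrictMono (psum m) := psum_strictMono m (fun t => (hm t).1)
  constructor
  · rintro ⟨h', hlt⟩
    rw [ahat_lF P φ m hm hsum _ h', ahat_lF P φ m hm hsum _ (by omega)] at hlt
    rw [extF, extF, dif_pos (by omega : a < r), dif_pos har]
    have h2 : φ ⟨a+1, har⟩ < φ ⟨a, by omega⟩ := by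
      rw [← hsm.lt_iff_lt]
      exact hlt
    exact (Fin.lt_iff_val_lt_val.1 h2)
  · intro hlt
    refine ⟨har, ?_⟩
    rw [ahat_lF P φ m hm hsum _ har, ahat_lF P φ m hm hsum _ (by omega)]
    rw [extF, extF, dif_pos (by omega : a < r), dif_pos har] at hlt
    exact hsm ((Fin.lt_iff_val_lt_val.2 hlt))

end Fwd

section Bwd
variable (P : ℕ) {r : ℕ} (l : Fin r → ℕ)

/-- the set of residues of partial sums -/
noncomputable def Sfin : Finset ℕ := Finset.image (Ahat P l) Finset.univ

noncomputable def sOf : ℕ := (Sfin P l).card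

noncomputable def eF : Fin (sOf P l) ↪o ℕ := (Sfin P l).orderEmbOfFin rfl

noncomputable def φOf : Fin r → Fin (sOf P l) := fun j =>
  ((Sfin P l).orderIsoOfFin rfl).symm ⟨Ahat P l j, Finset.mem_image_of_mem _ (Finset.mem_univ j)⟩

noncomputable def mOf : Fin (sOf P l) → ℕ := dstep (fun t => eF P l t)

lemma eF_φOf (j : Fin r) : eF P l (φOf P l j) = Ahat P l j := by
  have h := congrArg (Subtype.val)
    (((Sfin P l).orderIsoOfFin rfl).apply_symm_apply
      ⟨Ahat P l j, Finset.mem_image_of_mem _ (Finset.mem_univ j)⟩)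
  rw [Finset.coe_orderIsoOfFin_apply] at h
  exact h

lemma eF_mem (t : Fin (sOf P l)) : eF P l t ∈ Sfin P l := Finset.orderEmbOfFin_mem _ _ _

lemma mem_Sfin_bounds (hl : ∀ j, 0 < l j ∧ l j < P) (hgood : ∀ j, Ahat P l j ≠ 0)
    {x : ℕ} (hx : x ∈ Sfin P l) : 0 < x ∧ x < P := by
  obtain ⟨j, -, rfl⟩ := Finset.mem_image.1 hx
  have hP : 0 < P := lt_trans (hl j).1 (hl j).2
  exact ⟨Nat.pos_of_ne_zero (hgood j), Nat.mod_lt _ hP⟩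

lemma eF_strictMono : StrictMono (fun t => (eF P l t : ℕ)) := ((Sfin P l).orderEmbOfFin rfl).strictMono

lemma psum_mOf (t : ℕ) (h : t < sOf P l) : psum (mOf P l) ⟨t, h⟩ = eF P l ⟨t, h⟩ :=
  psum_dstep _ (eF_strictMono P l) t h

lemma mOf_bounds (hl : ∀ j, 0 < l j ∧ l j < P) (hgood : ∀ j, Ahat P l j ≠ 0) (t : Fin (sOf P l)) :
    0 < mOf P l t ∧ mOf P l t < P := by
  have hb := mem_Sfin_bounds P l hl hgood (eF_mem P l t)
  constructor
  · rcases t with ⟨t, ht⟩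
    cases t with
    | zero => simpa [mOf, dstep] using hb.1
    | succ t =>
      have hlt : (eF P l ⟨t+1-1, by omega⟩ : ℕ) < eF P l ⟨t+1, ht⟩ :=
        eF_strictMono P l (by simp [Fin.lt_def])
      simp only [mOf, dstep, dif_neg (Nat.succ_ne_zero t)]
      omega
  · calc mOf P l t ≤ eF P l t := Nat.sub_le _ _
      _ < P := hb.2

lemma sOf_pos (hr : 0 < r) : 0 < sOf P l :=
  Finset.card_pos.2 ⟨Ahat P l ⟨0, hr⟩, Finset.mem_image_of_mem _ (Finset.mem_univ _)⟩

lemma sOf_le (hr : 0 < r) : sOf P l ≤ r :=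
  le_trans (Finset.card_image_le) (by simp)

lemma sum_mOf_lt (hr : 0 < r) (hl : ∀ j, 0 < l j ∧ l j < P) (hgood : ∀ j, Ahat P l j ≠ 0) :
    ∑ t, mOf P l t < P := by
  have hs : 0 < sOf P l := sOf_pos P l hr
  have h1 : ∑ t, mOf P l t = psum (mOf P l) ⟨sOf P l - 1, by omega⟩ := (psum_last _ hs).symm
  rw [h1, psum_mOf]
  exact (mem_Sfin_bounds P l hl hgood (eF_mem P l _)).2

lemma ahat_adj (hl : ∀ j, 0 < l j ∧ l j < P) (a : ℕ) (h : a + 1 < r) :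
    Ahat P l ⟨a+1, h⟩ ≠ Ahat P l ⟨a, by omega⟩ := by
  intro hEq
  have hps : psum l ⟨a+1, h⟩ = psum l ⟨a, by omega⟩ + l ⟨a+1, h⟩ := psum_succ l a h
  have hc1 := (hl ⟨a+1, h⟩).1
  have hc2 := (hl ⟨a+1, h⟩).2
  rw [Ahat, Ahat, hps] at hEq
  have : (psum l ⟨a, by omega⟩ + l ⟨a+1, h⟩) % P = (psum l ⟨a, by omega⟩ + 0) % P := by
    simpa using hEq
  have h2 : l ⟨a+1, h⟩ ≡ 0 [MOD P] := Nat.ModEq.add_left_cancel' _ this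
  have hdvd : P ∣ l ⟨a+1, h⟩ := (Nat.modEq_zero_iff_dvd).1 h2
  have := Nat.le_of_dvd hc1 hdvd
  omega

lemma φOf_mem (hl : ∀ j, 0 < l j ∧ l j < P) : φOf P l ∈ PhiSet r (sOf P l) := by
  constructor
  · intro t
    have := eF_mem P l t
    obtain ⟨j, -, hj⟩ := Finset.mem_image.1 this
    refine ⟨j, ?_⟩
    have : eF P l (φOf P l j) = eF P l t := by rw [eF_φOf, hj]
    exact (eF_strictMono P l).injective this
  · intro a h hEq
    rw [extF, extF, dif_pos (by omega : a < r), dif_pos h] at hEq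
    have hφ : φOf P l ⟨a, by omega⟩ = φOf P l ⟨a+1, h⟩ := Fin.ext hEq
    have : Ahat P l ⟨a, by omega⟩ = Ahat P l ⟨a+1, h⟩ := by
      rw [← eF_φOf P l, ← eF_φOf P l, hφ]
    exact ahat_adj P l hl a h this.symm

lemma deltaF_φOf (hr : 0 < r) : deltaF (φOf P l) r = wr P l (r - 1) := by
  rw [deltaF, wr]
  congr 1
  apply Finset.filter_congr
  intro a ha
  rw [Finset.mem_range] at ha
  have har : a + 1 < r := by omega
  constructor
  · intro hlt
    refine ⟨har, ?_⟩
    rw [extF, extF, dif_pos (by omega : a < r), dif_pos har] at hlt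
    have h2 : φOf P l ⟨a+1, har⟩ < φOf P l ⟨a, by omega⟩ := Fin.lt_iff_val_lt_val.2 hlt
    have h3 := (eF_strictMono P l) h2
    simp only [] at h3
    rwa [eF_φOf, eF_φOf] at h3
  · rintro ⟨h', hlt⟩
    rw [extF, extF, dif_pos (by omega : a < r), dif_pos har]
    have h2 : eF P l (φOf P l ⟨a+1, har⟩) < eF P l (φOf P l ⟨a, by omega⟩) := by
      rw [eF_φOf, eF_φOf]
      exact hlt
    exact Fin.lt_iff_val_lt_val.1 ((eF_strictMono P l).lt_iff_lt.1 h2)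

lemma BfF_φOf_mOf : BfF (φOf P l) (mOf P l) = Ahat P l := by
  funext j
  rw [BfF]
  rcases hφ : φOf P l j with ⟨t, ht⟩
  rw [psum_mOf P l t ht, ← hφ, eF_φOf]

lemma lF_φOf_mOf (hl : ∀ j, 0 < l j ∧ l j < P) : lF P (φOf P l) (mOf P l) = l := by
  rw [lF, BfF_φOf_mOf, lOfB_ahat P l hl]

end Bwd

section Vals

lemma wr_det {r : ℕ} (P : ℕ) (l : Fin r → ℕ) (hr : 0 < r) (hl : ∀ j, 0 < l j ∧ l j < P)
    (hgood : ∀ j, Ahat P l j ≠ 0) {i : ℕ} (hi : 1 ≤ i)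
    (h1 : (i - 1) * P < ∑ j, l j) (h2 : ∑ j, l j < i * P) :
    wr P l (r - 1) = i - 1 := by
  have hP : 0 < P := lt_trans (hl ⟨0, hr⟩).1 (hl ⟨0, hr⟩).2
  have hB := psum_eq_ahat_add_wr P l hl (r-1) (by omega)
  have hlast : psum l ⟨r-1, by omega⟩ = ∑ j, l j := psum_last l hr
  set w := wr P l (r-1) with hw
  set a := Ahat P l ⟨r-1, by omega⟩ with ha
  have ha1 : 0 < a := Nat.pos_of_ne_zero (hgood _)
  have ha2 : a < P := Nat.mod_lt _ hP
  have hsum : ∑ j, l j = a + w * P := by rw [← hlast, hB]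
  have hiP : i * P = (i-1) * P + P := by
    have hii : i - 1 + 1 = i := by omega
    calc i * P = (i - 1 + 1) * P := by rw [hii]
      _ = (i-1) * P + P := by ring
  rcases lt_trichotomy w (i-1) with hlt | heq | hgt
  · exfalso
    have hle : (w + 1) * P ≤ (i - 1) * P := Nat.mul_le_mul_right _ (by omega)
    have h3 : (w+1) * P = w * P + P := by ring
    omega
  · exact heq
  · exfalso
    have hle : i * P ≤ w * P := Nat.mul_le_mul_right _ (by omega)
    omega

lemma den_eq_zero (p : PP) (k : List ℕ) (hk : ∀ j ∈ k, 0 < j) (l : Fin k.length → ℕ)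
    (j : Fin k.length) (hj : Ahat (p : ℕ) l j = 0) : den p k l = 0 := by
  apply Finset.prod_eq_zero (Finset.mem_univ j)
  have hdvd : (p : ℕ) ∣ psum l j := Nat.dvd_of_mod_eq_zero hj
  have hcast : ((psum l j : ℕ) : ZMod (p : ℕ)) = 0 :=
    (ZMod.natCast_eq_zero_iff _ _).2 hdvd
  rw [hcast]
  exact zero_pow (hk _ (List.get_mem k j)).ne'

lemma cast_psum_lF (p : PP) {r s : ℕ} (φ : Fin r → Fin s) (m : Fin s → ℕ)
    (hφ : φ ∈ PhiSet r s) (hm : ∀ t, 0 < m t ∧ m t < (p : ℕ)) (hsum : ∑ t, m t < (p : ℕ))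
    (j : Fin r) :
    ((psum (lF (p : ℕ) φ m) j : ℕ) : ZMod (p : ℕ)) = ((psum m (φ j) : ℕ) : ZMod (p : ℕ)) := by
  rcases j with ⟨j, hj⟩
  have hB := psum_eq_ahat_add_wr (p : ℕ) (lF (p : ℕ) φ m) (lF_bounds _ φ m hm hsum hφ) j hj
  rw [hB, ahat_lF _ φ m hm hsum j hj]
  push_cast
  rw [ZMod.natCast_self]
  rw [BfF]
  ring

lemma den_lF (p : PP) (k : List ℕ) {s : ℕ} (φ : Fin k.length → Fin s) (m : Fin s → ℕ)
    (hφ : φ ∈ PhiSet k.length s) (hm : ∀ t, 0 < m t ∧ m t < (p : ℕ))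
    (hsum : ∑ t, m t < (p : ℕ)) :
    den p k (lF (p : ℕ) φ m) = ∏ t : Fin s, ((psum m t : ℕ) : ZMod (p : ℕ)) ^
      (∑ j ∈ Finset.univ.filter (fun j => φ j = t), k.get j) := by
  rw [den]
  rw [Finset.prod_congr rfl (fun j _ => by
    rw [cast_psum_lF p φ m hφ hm hsum j] :
      ∀ j ∈ Finset.univ, ((psum (lF (p : ℕ) φ m) j : ℕ) : ZMod (p : ℕ)) ^ (k.get j)
        = ((psum m (φ j) : ℕ) : ZMod (p : ℕ)) ^ (k.get j))]
  rw [← Finset.prod_fiberwise Finset.univ φ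
    (fun j => ((psum m (φ j) : ℕ) : ZMod (p : ℕ)) ^ (k.get j))]
  apply Finset.prod_congr rfl
  intro t _
  rw [← Finset.prod_pow_eq_pow_sum]
  apply Finset.prod_congr rfl
  intro j hj
  rw [(Finset.mem_filter.1 hj).2]

lemma sum_den_cast (p : PP) (K : List ℕ) {s : ℕ} (h : K.length = s) (g : Fin s → ℕ)
    (hget : ∀ t : Fin K.length, K.get t = g (Fin.cast h t)) :
    ∑ m' ∈ (pf K.length (p : ℕ)).filter (fun m' => ∑ t, m' t < (p : ℕ)), (den p K m')⁻¹
      = ∑ m ∈ (pf s (p : ℕ)).filter (fun m => ∑ t, m t < (p : ℕ)),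
          (∏ t, ((psum m t : ℕ) : ZMod (p : ℕ)) ^ g t)⁻¹ := by
  subst h
  apply Finset.sum_congr rfl
  intro m _
  congr 1
  rw [den]
  apply Finset.prod_congr rfl
  intro t _
  rw [hget t]
  congr 1

end Vals
section LeftInv

lemma sigma_pair_ext {r : ℕ} {s s' : ℕ} (h : s = s') (φ : Fin r → Fin s) (φ' : Fin r → Fin s')
    (m : Fin s → ℕ) (m' : Fin s' → ℕ) (hφ : ∀ j, (φ j : ℕ) = (φ' j : ℕ))
    (hm : ∀ t : Fin s, m t = m' (Fin.cast h t)) :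
    (⟨s, (φ, m)⟩ : Σ s, (Fin r → Fin s) × (Fin s → ℕ)) = ⟨s', (φ', m')⟩ := by
  subst h
  have h1 : φ = φ' := funext fun j => Fin.ext (hφ j)
  have h2 : m = m' := funext fun t => hm t
  rw [h1, h2]

lemma dstep_cast {s s' : ℕ} (h : s = s') (c : Fin s' → ℕ) (t : Fin s) :
    dstep (fun u => c (Fin.cast h u)) t = dstep c (Fin.cast h t) := by
  subst h
  rfl

variable (P : ℕ) {r s : ℕ} (φ : Fin r → Fin s) (m : Fin s → ℕ)
  (hφ : φ ∈ PhiSet r s) (hm : ∀ t, 0 < m t ∧ m t < P) (hsum : ∑ t, m t < P)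

include hφ hm hsum in
lemma Sfin_lF : Sfin P (lF P φ m) = Finset.image (psum m) Finset.univ := by
  rw [Sfin]
  have h1 : Ahat P (lF P φ m) = fun j => psum m (φ j) := by
    funext j
    rcases j with ⟨j, hj⟩
    rw [ahat_lF P φ m hm hsum j hj]
    rfl
  rw [h1]
  have h2 : (fun j => psum m (φ j)) = psum m ∘ φ := rfl
  rw [h2, ← Finset.image_image, Finset.image_univ_of_surjective hφ.1]

include hφ hm hsum in
lemma sOf_lF : sOf P (lF P φ m) = s := by
  rw [sOf, Sfin_lF P φ m hφ hm hsum,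
    Finset.card_image_of_injective _ (psum_strictMono m (fun t => (hm t).1)).injective,
    Finset.card_univ, Fintype.card_fin]

include hφ hm hsum in
lemma psum_m_orderEmb :
    psum m = fun t => (Sfin P (lF P φ m)).orderEmbOfFin (sOf_lF P φ m hφ hm hsum) t := by
  have := Finset.orderEmbOfFin_unique
    (s := Sfin P (lF P φ m)) (h := sOf_lF P φ m hφ hm hsum) (f := psum m)
    (fun t => by
      rw [Sfin_lF P φ m hφ hm hsum]
      exact Finset.mem_image_of_mem _ (Finset.mem_univ t))
    (psum_strictMono m (fun t => (hm t).1))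
  exact this

include hφ hm hsum in
lemma φOf_lF (j : Fin r) : (φOf P (lF P φ m) j : ℕ) = (φ j : ℕ) := by
  have h1 : eF P (lF P φ m) (φOf P (lF P φ m) j) = Ahat P (lF P φ m) j := eF_φOf P _ j
  have h2 : Ahat P (lF P φ m) j = psum m (φ j) := by
    rcases j with ⟨j, hj⟩
    rw [ahat_lF P φ m hm hsum j hj]
    rfl
  have h3 : psum m (φ j) =
      (Sfin P (lF P φ m)).orderEmbOfFin (sOf_lF P φ m hφ hm hsum) (φ j) := by
    rw [psum_m_orderEmb P φ m hφ hm hsum]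
  have h4 : (Sfin P (lF P φ m)).orderEmbOfFin rfl (φOf P (lF P φ m) j) =
      (Sfin P (lF P φ m)).orderEmbOfFin (sOf_lF P φ m hφ hm hsum) (φ j) := by
    rw [show (Sfin P (lF P φ m)).orderEmbOfFin rfl (φOf P (lF P φ m) j)
        = eF P (lF P φ m) (φOf P (lF P φ m) j) from rfl, h1, h2, h3]
  exact Finset.orderEmbOfFin_eq_orderEmbOfFin_iff.1 h4

include hφ hm hsum in
lemma mOf_lF (t : Fin (sOf P (lF P φ m))) :
    mOf P (lF P φ m) t = m (Fin.cast (sOf_lF P φ m hφ hm hsum) t) := by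
  have hc := sOf_lF P φ m hφ hm hsum
  have h1 : (fun u => (eF P (lF P φ m) u : ℕ)) =
      (fun u => psum m (Fin.cast hc u)) := by
    funext u
    rw [psum_m_orderEmb P φ m hφ hm hsum]
    exact Finset.orderEmbOfFin_eq_orderEmbOfFin_iff.2 rfl
  rw [mOf, h1, dstep_cast hc (psum m) t, dstep_psum]

end LeftInv

end Aux



/-- The variant ζ^{(i)}_𝒜 is a sum of finite multiple zeta values of the same weight. -/
theorem zetaAi_eq_sum_zetaA (k : List ℕ) (hk : ∀ j ∈ k, 0 < j) (hr : 0 < k.length)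
    (i : ℕ) (hi1 : 1 ≤ i) (hi2 : i ≤ k.length) :
    zetaAi i k = ∑ s ∈ Finset.Icc 1 k.length,
      ∑ φ ∈ Finset.univ.filter
        (fun φ : Fin k.length → Fin s => φ ∈ PhiSet k.length s ∧ betaF φ = i),
        zetaA (List.ofFn fun t : Fin s =>
          ∑ j ∈ Finset.univ.filter (fun j => φ j = t), k.get j) := by
  have hA : ∀ {α : Type} (t : Finset α) (F : α → (∀ q : PP, ZMod q)),
      ∑ x ∈ t, Amk (F x) = Amk (fun q => ∑ x ∈ t, F x q) := by
    intro α t F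
    rw [← map_sum]
    congr 1
    funext q
    simp
  have hRHS : ∑ s ∈ Finset.Icc 1 k.length,
      ∑ φ ∈ Finset.univ.filter
        (fun φ : Fin k.length → Fin s => φ ∈ PhiSet k.length s ∧ betaF φ = i),
        zetaA (List.ofFn fun t : Fin s =>
          ∑ j ∈ Finset.univ.filter (fun j => φ j = t), k.get j)
      = Amk (fun q => ∑ s ∈ Finset.Icc 1 k.length,
          ∑ φ ∈ Finset.univ.filter
            (fun φ : Fin k.length → Fin s => φ ∈ PhiSet k.length s ∧ betaF φ = i),
            ∑ m ∈ (pf s (q : ℕ)).filter (fun m => ∑ t, m t < (q : ℕ)),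
              (∏ t, ((psum m t : ℕ) : ZMod (q : ℕ)) ^
                (∑ j ∈ Finset.univ.filter (fun j => φ j = t), k.get j))⁻¹) := by
    rw [← hA]
    apply Finset.sum_congr rfl
    intro s _
    rw [← hA]
    apply Finset.sum_congr rfl
    intro φ _
    rw [zetaA]
    congr 1
    funext q
    exact sum_den_cast q _ List.length_ofFn _ (fun t => by rw [List.get_ofFn])
  rw [hRHS]
  apply congrArg Amk
  funext q
  have hp : (q : ℕ).Prime := q.2
  have hP1 : 1 < (q : ℕ) := hp.one_lt
  set P := (q : ℕ) with hPdef
  -- the target (good) finset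
  set Tgt : Finset (Fin k.length → ℕ) := (pf k.length P).filter
    (fun l => ((i-1)*P < ∑ j, l j ∧ ∑ j, l j < i*P) ∧ ∀ j, Ahat P l j ≠ 0) with hTgt
  -- the domain finset
  set Dom : Finset ((s : ℕ) × ((Fin k.length → Fin s) × (Fin s → ℕ))) :=
    (Finset.Icc 1 k.length).sigma (fun s =>
      (Finset.univ.filter
        (fun φ : Fin k.length → Fin s => φ ∈ PhiSet k.length s ∧ betaF φ = i)) ×ˢ
      ((pf s P).filter (fun m => ∑ t, m t < P))) with hDom
  have hiP : i * P = (i-1) * P + P := by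
    have hii : i - 1 + 1 = i := by omega
    calc i * P = (i - 1 + 1) * P := by rw [hii]
      _ = (i-1) * P + P := by ring
  -- step 1: restrict LHS to good tuples
  have hsub : Tgt ⊆ (pf k.length P).filter
      (fun l => (i-1)*P < ∑ j, l j ∧ ∑ j, l j < i*P) := by
    rw [hTgt]
    exact Finset.monotone_filter_right _ (fun l _ hl => hl.1)
  have hzero : ∀ l ∈ (pf k.length P).filter
      (fun l => (i-1)*P < ∑ j, l j ∧ ∑ j, l j < i*P), l ∉ Tgt → (den q k l)⁻¹ = 0 := by
    intro l hl hnl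
    rw [Finset.mem_filter] at hl
    have hbad : ¬ ∀ j, Ahat P l j ≠ 0 := fun hg => hnl (Finset.mem_filter.2 ⟨hl.1, hl.2, hg⟩)
    push_neg at hbad
    obtain ⟨j, hj⟩ := hbad
    rw [den_eq_zero q k hk l j hj, inv_zero]
  -- step 2: the bijection
  have hbij : ∑ x ∈ Dom,
      (∏ t, ((psum x.2.2 t : ℕ) : ZMod P) ^
        (∑ j ∈ Finset.univ.filter (fun j => x.2.1 j = t), k.get j))⁻¹
      = ∑ l ∈ Tgt, (den q k l)⁻¹ := by
    apply Finset.sum_nbij' (fun x => lF P x.2.1 x.2.2)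
      (fun l => ⟨sOf P l, (φOf P l, mOf P l)⟩)
    · -- maps to Tgt
      rintro ⟨s, φ, m⟩ hx
      dsimp only
      simp only [hDom, Finset.mem_sigma, Finset.mem_product, Finset.mem_filter,
        Finset.mem_univ, true_and] at hx
      obtain ⟨hs, ⟨hφ, hβ⟩, hmpf, hmsum⟩ := hx
      have hm : ∀ t, 0 < m t ∧ m t < P := by
        intro t
        have := (Fintype.mem_piFinset).1 hmpf t
        rwa [Finset.mem_Ioo] at this
      have hbd := lF_bounds P φ m hm hmsum hφ
      have hwr : wr P (lF P φ m) (k.length - 1) = i - 1 := by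
        rw [wr_lF P φ m hm hmsum hφ (k.length - 1) le_rfl hr]
        have : deltaF φ k.length = i - 1 := by
          have := hβ
          rw [betaF] at this
          omega
        rw [← this]
        rfl
      have hsuml : ∑ j, lF P φ m j = BfF φ m ⟨k.length - 1, by omega⟩ + (i-1) * P := by
        rw [← psum_last _ hr, psum_eq_ahat_add_wr P _ hbd (k.length - 1) (by omega),
          ahat_lF P φ m hm hmsum, hwr]
      have hBb := BfF_bounds P φ m hm hmsum ⟨k.length - 1, by omega⟩
      rw [hTgt, Finset.mem_filter]
      refine ⟨Fintype.mem_piFinset.2 (fun j => Finset.mem_Ioo.2 (hbd j)), ⟨?_, ?_⟩, ?_⟩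
      · omega
      · omega
      · intro j
        rcases j with ⟨j, hj⟩
        rw [ahat_lF P φ m hm hmsum j hj]
        exact (BfF_bounds P φ m hm hmsum ⟨j, hj⟩).1.ne'
    · -- maps to Dom
      intro l hl
      rw [hTgt, Finset.mem_filter] at hl
      obtain ⟨hlpf, hcond, hgood⟩ := hl
      have hlb : ∀ j, 0 < l j ∧ l j < P := by
        intro j
        have := (Fintype.mem_piFinset).1 hlpf j
        rwa [Finset.mem_Ioo] at this
      simp only [hDom, Finset.mem_sigma, Finset.mem_product, Finset.mem_filter,
        Finset.mem_univ, true_and]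
      refine ⟨?_, ⟨φOf_mem P l hlb, ?_⟩, ?_, ?_⟩
      · rw [Finset.mem_Icc]
        exact ⟨sOf_pos P l hr, sOf_le P l hr⟩
      · rw [betaF, deltaF_φOf P l hr, wr_det P l hr hlb hgood hi1 hcond.1 hcond.2]
        omega
      · exact Fintype.mem_piFinset.2 (fun t => Finset.mem_Ioo.2 (mOf_bounds P l hlb hgood t))
      · exact sum_mOf_lt P l hr hlb hgood
    · -- left inverse
      rintro ⟨s, φ, m⟩ hx
      simp only [hDom, Finset.mem_sigma, Finset.mem_product, Finset.mem_filter,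
        Finset.mem_univ, true_and] at hx
      obtain ⟨hs, ⟨hφ, hβ⟩, hmpf, hmsum⟩ := hx
      have hm : ∀ t, 0 < m t ∧ m t < P := by
        intro t
        have := (Fintype.mem_piFinset).1 hmpf t
        rwa [Finset.mem_Ioo] at this
      exact sigma_pair_ext (sOf_lF P φ m hφ hm hmsum) _ _ _ _
        (φOf_lF P φ m hφ hm hmsum) (mOf_lF P φ m hφ hm hmsum)
    · -- right inverse
      intro l hl
      rw [hTgt, Finset.mem_filter] at hl
      have hlb : ∀ j, 0 < l j ∧ l j < P := by
        intro j
        have := (Fintype.mem_piFinset).1 hl.1 j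
        rwa [Finset.mem_Ioo] at this
      exact lF_φOf_mOf P l hlb
    · -- values
      rintro ⟨s, φ, m⟩ hx
      simp only [hDom, Finset.mem_sigma, Finset.mem_product, Finset.mem_filter,
        Finset.mem_univ, true_and] at hx
      obtain ⟨hs, ⟨hφ, hβ⟩, hmpf, hmsum⟩ := hx
      have hm : ∀ t, 0 < m t ∧ m t < P := by
        intro t
        have := (Fintype.mem_piFinset).1 hmpf t
        rwa [Finset.mem_Ioo] at this
      exact congrArg Inv.inv (den_lF q k φ m hφ hm hmsum).symm
  -- step 3: assemble
  calc (fun q : PP => ∑ l ∈ (pf k.length (q:ℕ)).filter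
        (fun l => (i - 1) * (q:ℕ) < ∑ j, l j ∧ ∑ j, l j < i * (q:ℕ)), (den q k l)⁻¹) q
      = ∑ l ∈ Tgt, (den q k l)⁻¹ := (Finset.sum_subset hsub hzero).symm
    _ = ∑ x ∈ Dom, (∏ t, ((psum x.2.2 t : ℕ) : ZMod P) ^
        (∑ j ∈ Finset.univ.filter (fun j => x.2.1 j = t), k.get j))⁻¹ := hbij.symm
    _ = _ := by
        rw [hDom, Finset.sum_sigma]
        apply Finset.sum_congr rfl
        intro s _
        rw [Finset.sum_product]
end FMP
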